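/- Let E be a directed graph and A = KE its path algebra over a field K. The following are equivalent: (1) A is left artinian; (2) E has no closed paths and E^0 ∪ E^1 is finite; (3) A is finite dimensional over K. -/

import Mathlib

/-- A directed graph: vertices, edges, source and range maps. -/
structure DGraph : Type 1 where
  V : Type
  Edge : Type
  s : Edge → V
  r : Edge → V

namespace DGraph

/-- A list of edges is composable if consecutive edges match up. -/
def IsComposable (G : DGraph) (l : List G.Edge) : Prop :=
  l.Chain' (fun e f => G.r e = G.s f)

/-- A path in `G`: either a trivial path at a vertex, or a nonempty composable list of edges. -/
def GPath (G : DGraph) : Type :=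
  G.V ⊕ {l : List G.Edge // l ≠ [] ∧ G.IsComposable l}

namespace GPath

variable {G : DGraph}

/-- The source of a path. -/
def src : GPath G → G.V
  | Sum.inl v => v
  | Sum.inr l => G.s (l.1.head l.2.1)

/-- The range of a path. -/
def rng : GPath G → G.V
  | Sum.inl v => v
  | Sum.inr l => G.r (l.1.getLast l.2.1)

/-- The length of a path. -/
def length : GPath G → ℕ
  | Sum.inl _ => 0
  | Sum.inr l => l.1.length

/-- The trivial path at a vertex. -/
def ofVertex (v : G.V) : GPath G := Sum.inl v

/-- The length-one path given by an edge. -/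
def ofEdge (e : G.Edge) : GPath G :=
  Sum.inr ⟨[e], by simp [IsComposable, List.Chain']⟩

/-- Concatenation of composable paths. -/
def comp : (p q : GPath G) → p.rng = q.src → GPath G
  | Sum.inl _, q, _ => q
  | Sum.inr l, Sum.inl _, _ => Sum.inr l
  | Sum.inr l, Sum.inr m, h => Sum.inr ⟨l.1 ++ m.1, by
      refine ⟨by simp [l.2.1], l.2.2.append m.2.2 ?_⟩
      intro x hx y hy
      rw [List.getLast?_eq_some_getLast l.2.1] at hx
      rw [List.head?_eq_head m.2.1] at hy
      cases hx
      cases hy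
      exact h⟩

end GPath

end DGraph

open DGraph

/-- A realization of the path algebra of the graph `G` over the field `K`:
a `K`-algebra with a basis indexed by the paths of `G`, multiplying by concatenation. -/
structure PathAlgebraOn (K : Type) [Field K] (G : DGraph) (A : Type)
    [NonUnitalRing A] [Module K A] where
  basis : Module.Basis (GPath G) K A
  mul_comp : ∀ (p q : GPath G) (h : p.rng = q.src),
      basis p * basis q = basis (p.comp q h)
  mul_ncomp : ∀ p q : GPath G, p.rng ≠ q.src → basis p * basis q = 0

/-- A `K`-subspace of `A` which is a left ideal. -/
def IsLeftIdeal (K : Type) [Field K] (A : Type) [NonUnitalRing A] [Module K A]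
    (S : Submodule K A) : Prop :=
  ∀ a : A, ∀ x ∈ S, a * x ∈ S

/-- A `K`-subspace of `A` which is a right ideal. -/
def IsRightIdeal (K : Type) [Field K] (A : Type) [NonUnitalRing A] [Module K A]
    (S : Submodule K A) : Prop :=
  ∀ a : A, ∀ x ∈ S, x * a ∈ S

/-- The descending chain condition on left ideals. -/
def IsLeftArtinianAlg (K : Type) [Field K] (A : Type) [NonUnitalRing A] [Module K A] : Prop :=
  ∀ f : ℕ → Submodule K A, (∀ m, IsLeftIdeal K A (f m)) → (∀ m, f (m + 1) ≤ f m) →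
    ∃ m, ∀ l, m ≤ l → f l = f m

/-- The ascending chain condition on left ideals. -/
def IsLeftNoetherianAlg (K : Type) [Field K] (A : Type) [NonUnitalRing A] [Module K A] : Prop :=
  ∀ f : ℕ → Submodule K A, (∀ m, IsLeftIdeal K A (f m)) → (∀ m, f m ≤ f (m + 1)) →
    ∃ m, ∀ l, m ≤ l → f l = f m

/-- A minimal left ideal: nonzero, and containing no nonzero proper left subideal. -/
def IsMinimalLeftIdeal (K : Type) [Field K] (A : Type) [NonUnitalRing A] [Module K A]
    (S : Submodule K A) : Prop :=
  IsLeftIdeal K A S ∧ S ≠ ⊥ ∧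
    ∀ T : Submodule K A, IsLeftIdeal K A T → T ≤ S → T = ⊥ ∨ T = S

/-- A minimal right ideal. -/
def IsMinimalRightIdeal (K : Type) [Field K] (A : Type) [NonUnitalRing A] [Module K A]
    (S : Submodule K A) : Prop :=
  IsRightIdeal K A S ∧ S ≠ ⊥ ∧
    ∀ T : Submodule K A, IsRightIdeal K A T → T ≤ S → T = ⊥ ∨ T = S

-- auxiliary development
namespace DGraph
namespace GPath
variable {G : DGraph}

lemma rng_comp (p q : GPath G) (h : p.rng = q.src) : (p.comp q h).rng = q.rng := by
  cases p with
  | inl v => rfl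
  | inr l =>
    cases q with
    | inl v => exact h
    | inr m =>
      show G.r ((l.1 ++ m.1).getLast _) = G.r (m.1.getLast m.2.1)
      rw [List.getLast_append_of_right_ne_nil _ _ m.2.1]

lemma length_comp (p q : GPath G) (h : p.rng = q.src) :
    (p.comp q h).length = p.length + q.length := by
  cases p with
  | inl v => simp [comp, length]
  | inr l =>
    cases q with
    | inl v => simp [comp, length]
    | inr m => simp [comp, length]

end GPath
end DGraph

lemma exists_decomp {α : Type*} {l : List α} (h : ¬ l.Nodup) :
    ∃ (x : α) (l₁ l₂ l₃ : List α), l = l₁ ++ x :: l₂ ++ x :: l₃ := by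
  induction l with
  | nil => simp at h
  | cons a l ih =>
    rw [List.nodup_cons] at h
    push_neg at h
    by_cases ha : a ∈ l
    · obtain ⟨l₂, l₃, rfl⟩ := List.append_of_mem ha
      exact ⟨a, [], l₂, l₃, rfl⟩
    · obtain ⟨x, l₁, l₂, l₃, rfl⟩ := ih (h ha)
      exact ⟨x, a :: l₁, l₂, l₃, rfl⟩

lemma nodup_of_composable {G : DGraph}
    (hnc : ¬ ∃ p : GPath G, 0 < p.length ∧ p.src = p.rng)
    {l : List G.Edge} (hl : G.IsComposable l) : l.Nodup := by
  by_contra h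
  obtain ⟨x, l₁, l₂, l₃, rfl⟩ := exists_decomp h
  apply hnc
  have hinf : (x :: l₂) <:+: (l₁ ++ x :: l₂ ++ x :: l₃) := ⟨l₁, x :: l₃, by simp⟩
  refine ⟨Sum.inr ⟨x :: l₂, by simp, hl.infix hinf⟩, by simp [GPath.length], ?_⟩
  show G.s ((x :: l₂).head _) = G.r ((x :: l₂).getLast _)
  have hinf2 : ((x :: l₂) ++ (x :: l₃)) <:+: (l₁ ++ x :: l₂ ++ x :: l₃) :=
    ⟨l₁, [], by simp⟩
  have hch := List.isChain_append.mp (hl.infix hinf2)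
  have := hch.2.2 ((x :: l₂).getLast (by simp)) ?_ x rfl
  · simpa using this.symm
  · rw [List.getLast?_eq_getLast (by simp)]; rfl

lemma finite_gpath (G : DGraph)
    (hnc : ¬ ∃ p : GPath G, 0 < p.length ∧ p.src = p.rng)
    (hV : Finite G.V) (hE : Finite G.Edge) : Finite (GPath G) := by
  haveI := Fintype.ofFinite G.Edge
  haveI : Finite {l : List G.Edge // l ≠ [] ∧ G.IsComposable l} := by
    haveI := (List.finite_length_le G.Edge (Fintype.card G.Edge)).to_subtype
    apply Finite.of_injective
      (fun l : {l : List G.Edge // l ≠ [] ∧ G.IsComposable l} =>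
        (⟨l.1, (nodup_of_composable hnc l.2.2).length_le_card⟩ :
          {l : List G.Edge | l.length ≤ Fintype.card G.Edge}))
    intro a b hab
    exact Subtype.ext (congrArg Subtype.val hab :)
  exact inferInstanceAs (Finite (G.V ⊕ {l : List G.Edge // l ≠ [] ∧ G.IsComposable l}))

lemma not_artinian_of_w (K : Type) [Field K] (G : DGraph)
    (A : Type) [NonUnitalRing A] [Module K A] [SMulCommClass K A A] [IsScalarTower K A A]
    (PA : PathAlgebraOn K G A) (w : GPath G → ℕ)
    (hw : ∀ p q (h : GPath.rng p = GPath.src q), w q ≤ w (p.comp q h))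
    (hs : ∀ n, ∃ p, w p = n) : ¬ IsLeftArtinianAlg K A := by
  intro hart
  set f : ℕ → Submodule K A := fun n => Submodule.span K (PA.basis '' {p | n ≤ w p}) with hf
  have key : ∀ m q, m ≤ w q → ∀ a : A, a * PA.basis q ∈ f m := by
    intro m q hq a
    have ha : a ∈ Submodule.span K (Set.range PA.basis) := by
      rw [PA.basis.span_eq]; exact Submodule.mem_top
    induction ha using Submodule.span_induction with
    | mem x hx =>
      obtain ⟨p, rfl⟩ := hx
      by_cases h : p.rng = q.src
      · rw [PA.mul_comp p q h]
        exact Submodule.subset_span ⟨_, le_trans hq (hw p q h), rfl⟩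
      · rw [PA.mul_ncomp p q h]; exact (f m).zero_mem
    | zero => rw [zero_mul]; exact (f m).zero_mem
    | add x y _ _ ihx ihy => rw [add_mul]; exact (f m).add_mem ihx ihy
    | smul k x _ ih => rw [smul_mul_assoc]; exact (f m).smul_mem k ih
  have hideal : ∀ m, IsLeftIdeal K A (f m) := by
    intro m a x hx
    induction hx using Submodule.span_induction with
    | mem y hy => obtain ⟨q, hq, rfl⟩ := hy; exact key m q hq a
    | zero => rw [mul_zero]; exact (f m).zero_mem
    | add x y _ _ ihx ihy => rw [mul_add]; exact (f m).add_mem ihx ihy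
    | smul k x _ ih => rw [mul_smul_comm]; exact (f m).smul_mem k ih
  have hmono : ∀ m, f (m + 1) ≤ f m := fun m =>
    Submodule.span_mono (Set.image_mono fun p hp => le_trans (Nat.le_succ m) hp)
  obtain ⟨m, hm⟩ := hart f hideal hmono
  obtain ⟨p, hp⟩ := hs m
  have h1 : PA.basis p ∈ f m := Submodule.subset_span ⟨p, le_of_eq hp.symm, rfl⟩
  have h2 : PA.basis p ∈ f (m + 1) := by rw [hm (m + 1) (Nat.le_succ m)]; exact h1
  exact PA.basis.linearIndependent.notMem_span_image
    (s := {p' : GPath G | m + 1 ≤ w p'}) (by simp [hp]) h2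

/-- `KE` is left artinian iff `E` has no closed paths and `E⁰ ∪ E¹` is
finite, iff `KE` is finite dimensional. -/
theorem stmt9 (K : Type) [Field K] (G : DGraph)
    (A : Type) [NonUnitalRing A] [Module K A] [SMulCommClass K A A] [IsScalarTower K A A]
    (PA : PathAlgebraOn K G A) :
    (IsLeftArtinianAlg K A ↔
      ((¬ ∃ p : GPath G, 0 < p.length ∧ p.src = p.rng) ∧ Finite G.V ∧ Finite G.Edge)) ∧
    (IsLeftArtinianAlg K A ↔ FiniteDimensional K A) := by
  have h23 : ((¬ ∃ p : GPath G, 0 < p.length ∧ p.src = p.rng) ∧ Finite G.V ∧ Finite G.Edge) →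
      FiniteDimensional K A := by
    rintro ⟨hnc, hV, hE⟩
    haveI := finite_gpath G hnc hV hE
    exact Module.Finite.of_basis PA.basis
  have h31 : FiniteDimensional K A → IsLeftArtinianAlg K A := by
    intro hfd f hid hle
    haveI := hfd
    haveI : IsArtinian K A := inferInstance
    obtain ⟨n, hn⟩ := IsArtinian.monotone_stabilizes (R := K) (M := A)
      ⟨fun n => OrderDual.toDual (f n), fun a b h => antitone_nat_of_succ_le hle h⟩
    exact ⟨n, fun l hl => (hn l hl).symm⟩
  have h12 : IsLeftArtinianAlg K A →
      ((¬ ∃ p : GPath G, 0 < p.length ∧ p.src = p.rng) ∧ Finite G.V ∧ Finite G.Edge) := by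
    intro hart
    refine ⟨?_, ?_, ?_⟩
    · rintro ⟨c, hc0, hcs⟩
      have hpow : ∀ n : ℕ, ∃ p : GPath G, p.length = n * c.length ∧ p.rng = c.rng := by
        intro n
        induction n with
        | zero => exact ⟨GPath.ofVertex c.rng, by simp [GPath.ofVertex, GPath.length], rfl⟩
        | succ n ih =>
          obtain ⟨p, hl, hr⟩ := ih
          refine ⟨p.comp c (hr.trans hcs.symm), ?_, GPath.rng_comp _ _ _⟩
          rw [GPath.length_comp, hl, Nat.succ_mul]
      refine not_artinian_of_w K G A PA (fun p => p.length / c.length) ?_ ?_ hart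
      · intro p q h
        rw [GPath.length_comp]
        exact Nat.div_le_div_right (Nat.le_add_left _ _)
      · intro n
        obtain ⟨p, hl, -⟩ := hpow n
        exact ⟨p, by rw [hl, Nat.mul_div_cancel _ hc0]⟩
    · by_contra hV
      haveI : Infinite G.V := not_finite_iff_infinite.mp hV
      set ι := Infinite.natEmbedding G.V with hι
      refine not_artinian_of_w K G A PA (fun p => Function.invFun ι p.rng) ?_ ?_ hart
      · intro p q h
        rw [GPath.rng_comp]
      · intro n
        exact ⟨GPath.ofVertex (ι n), Function.leftInverse_invFun ι.injective n⟩
    · by_contra hE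
      haveI : Infinite G.Edge := not_finite_iff_infinite.mp hE
      set ι := Infinite.natEmbedding G.Edge with hι
      set w : GPath G → ℕ := fun p => match p with
        | Sum.inl _ => 0
        | Sum.inr l => Function.invFun ι (l.1.getLast l.2.1) with hw
      refine not_artinian_of_w K G A PA w ?_ ?_ hart
      · intro p q h
        cases p with
        | inl v => exact le_of_eq rfl
        | inr l =>
          cases q with
          | inl v => exact Nat.zero_le _
          | inr m =>
            show Function.invFun ι (m.1.getLast m.2.1) ≤
              Function.invFun ι ((l.1 ++ m.1).getLast (by simp [l.2.1]))
            rw [List.getLast_append_of_right_ne_nil _ _ m.2.1]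
      · intro n
        refine ⟨GPath.ofEdge (ι n), ?_⟩
        show Function.invFun ι (([ι n]).getLast (by simp)) = n
        simp only [List.getLast_singleton]
        exact Function.leftInverse_invFun ι.injective n
  exact ⟨⟨h12, fun h2 => h31 (h23 h2)⟩, ⟨fun h => h23 (h12 h), h31⟩⟩
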